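/- Let G be a multigraph with spanning subgraph G₀, let l be an intersecting supermodular real function on subsets of V(G) with l(∅)=0, and let ε > 0. Suppose G is (l/ε)-partition-connected and d_{G₀}(X) ≥ ε·d_G(X) for every X ⊆ V(G). Then for every S ⊆ V(G), Θ_l(G₀ \ S) ≤ Σ_{v∈S} (½ d_{G₀}(v) + (ε/2) d_G(v) − l(v)) + l(V(G)) − e_{G₀}(S). -/
import Mathlib


open Finset

namespace Paper

variable {V : Type*} [Fintype V] [DecidableEq V]

/-- Bool test: the edge `e` has exactly one end in `X`. -/
def crossB (X : Finset V) : Sym2 V → Bool :=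
  Sym2.lift ⟨fun a b => xor (decide (a ∈ X)) (decide (b ∈ X)), by
    intro a b; simp [Bool.xor_comm]⟩

/-- Bool test: both ends of the edge `e` lie in `X`. -/
def bothB (X : Finset V) : Sym2 V → Bool :=
  Sym2.lift ⟨fun a b => decide (a ∈ X) && decide (b ∈ X), by
    intro a b; simp [Bool.and_comm]⟩

/-- A finite multigraph on vertex set `V`: a multiset of loopless edges. -/
structure MGraph (V : Type*) where
  edges : Multiset (Sym2 V)
  loopless : ∀ e ∈ edges, ¬ e.IsDiag

/-- Number of edges of the edge multiset `E` with exactly one end in `X`. -/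
def cutE (E : Multiset (Sym2 V)) (X : Finset V) : ℕ :=
  (E.filter (fun e => crossB X e = true)).card

/-- `d_G(X)`: number of edges of `G` with exactly one end in `X`. -/
def cut (G : MGraph V) (X : Finset V) : ℕ := cutE G.edges X

/-- Degree of a vertex in a multigraph. -/
def deg (G : MGraph V) (v : V) : ℕ := cut G {v}

/-- Number of edges of `E` with both ends in `S`. -/
def insideE (E : Multiset (Sym2 V)) (S : Finset V) : ℕ :=
  (E.filter (fun e => bothB S e = true)).card

/-- `P` is a partition of the vertex set `W` into nonempty parts. -/
def IsPartitionOf (W : Finset V) (P : Finset (Finset V)) : Prop :=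
  (∀ A ∈ P, A.Nonempty) ∧ (∀ A ∈ P, ∀ B ∈ P, A ≠ B → Disjoint A B) ∧ P.sup id = W

/-- Number of edges of `E` joining different parts of `P`. -/
def ePart (E : Multiset (Sym2 V)) (P : Finset (Finset V)) : ℕ :=
  (E.filter (fun e => decide (∀ A ∈ P, bothB A e = false) = true)).card

/-- The edge multiset `E`, restricted to the vertex set `W`, is `l`-partition-connected:
for every partition `P` of `W`, the number of edges (inside `W`) joining different parts
is at least `Σ_{A∈P} l(A) − l(W)`. -/
def LPCOn (E : Multiset (Sym2 V)) (W : Finset V) (l : Finset V → ℝ) : Prop :=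
  ∀ P : Finset (Finset V), IsPartitionOf W P →
    (ePart (E.filter (fun e => bothB W e = true)) P : ℝ) ≥ (∑ A ∈ P, l A) - l W

/-- The multigraph `G` is `l`-partition-connected. -/
def LPC (G : MGraph V) (l : Finset V → ℝ) : Prop := LPCOn G.edges Finset.univ l

/-- `t`-partition-connectivity (constant function `t`). -/
def PC (G : MGraph V) (t : ℝ) : Prop := LPC G (fun _ => t)

/-- `m`-tree-connectivity, via the Nash-Williams–Tutte theorem identified with
`m`-partition-connectivity. -/
def TreeConn (m : ℕ) (G : MGraph V) : Prop := PC G (m : ℝ)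

/-- `G` is properly `c`-colorable. -/
def MColorable (c : ℕ) (G : MGraph V) : Prop :=
  ∃ f : V → Fin c, ∀ a b : V, s(a, b) ∈ G.edges → f a ≠ f b

/-- `G` is bipartite. -/
def MBipartite (G : MGraph V) : Prop := MColorable 2 G

/-- `P` is the partition of `W` into the (vertex sets of the) `l`-partition-connected
components of the graph with edge multiset `E` restricted to `W`: each part induces an
`l`-partition-connected subgraph, and every set inducing an `l`-partition-connected
subgraph lies inside one part. -/
def IsLPCComponents (E : Multiset (Sym2 V)) (W : Finset V) (l : Finset V → ℝ)
    (P : Finset (Finset V)) : Prop :=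
  IsPartitionOf W P ∧ (∀ A ∈ P, LPCOn E A l) ∧
    ∀ B ⊆ W, B.Nonempty → LPCOn E B l → ∃ A ∈ P, B ⊆ A

/-- `Θ_l` computed with respect to the component partition `P` of `W`. -/
noncomputable def ThetaVal (E : Multiset (Sym2 V)) (W : Finset V) (l : Finset V → ℝ)
    (P : Finset (Finset V)) : ℝ :=
  (∑ A ∈ P, l A) - (ePart (E.filter (fun e => bothB W e = true)) P : ℝ)

/-- Intersecting supermodular set function. -/
def IntersectingSupermodular (l : Finset V → ℝ) : Prop :=
  ∀ A B : Finset V, (A ∩ B).Nonempty → l (A ∩ B) + l (A ∪ B) ≥ l A + l B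

/-- Nonincreasing set function. -/
def Nonincreasing (l : Finset V → ℝ) : Prop :=
  ∀ A B : Finset V, A.Nonempty → A ⊆ B → l A ≥ l B

/-- Edge multiset of a simple graph. -/
noncomputable def SGedges (G : SimpleGraph V) : Multiset (Sym2 V) :=
  (Set.toFinite G.edgeSet).toFinset.val

/-- `m`-tree-connectivity of a simple graph, via partition-connectivity. -/
noncomputable def TreeConnSG (m : ℕ) (G : SimpleGraph V) : Prop :=
  LPCOn (SGedges G) Finset.univ (fun _ => (m : ℝ))

/-- Degree in a simple graph. -/
noncomputable def degSG (G : SimpleGraph V) (v : V) : ℕ := Nat.card (G.neighborSet v)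

/-- `G` is `t`-tough. -/
def Tough (t : ℝ) (G : SimpleGraph V) : Prop :=
  ∀ S : Finset V,
    (Nat.card ((G.induce ((↑S : Set V)ᶜ)).ConnectedComponent) : ℝ) ≤
      max 1 ((S.card : ℝ) / t)

/-- Bool test: the two ends of `e` receive different values under `f`. -/
def diffB {c : ℕ} (f : V → Fin c) : Sym2 V → Bool :=
  Sym2.lift ⟨fun a b => decide (f a ≠ f b), by
    intro a b; simp [ne_comm]⟩

end Paper

open Paper

section Aux

set_option linter.unusedSectionVars false

variable {V : Type*} [Fintype V] [DecidableEq V]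

@[simp] lemma crossB_mk (X : Finset V) (a b : V) :
    crossB X s(a, b) = xor (decide (a ∈ X)) (decide (b ∈ X)) := rfl

@[simp] lemma bothB_mk (X : Finset V) (a b : V) :
    bothB X s(a, b) = (decide (a ∈ X) && decide (b ∈ X)) := rfl

noncomputable def indP (p : Sym2 V → Prop) [DecidablePred p] : Sym2 V → ℝ :=
  fun e => if p e then 1 else 0

lemma card_filter_real (p : Sym2 V → Prop) [DecidablePred p] (E : Multiset (Sym2 V)) :
    ((E.filter p).card : ℝ) = (E.map (indP p)).sum := by
  induction E using Multiset.induction with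
  | empty => simp
  | cons a s ih =>
      by_cases h : p a <;> simp [Multiset.filter_cons, h, indP, ih, add_comm]

lemma sum_map_swap {β : Type*} (P : Finset β) (E : Multiset (Sym2 V)) (f : β → Sym2 V → ℝ) :
    ∑ A ∈ P, (E.map (f A)).sum = (E.map (fun e => ∑ A ∈ P, f A e)).sum := by
  induction E using Multiset.induction with
  | empty => simp
  | cons a s ih => simp [ih, Finset.sum_add_distrib]

lemma part_subset {W : Finset V} {P : Finset (Finset V)} (h : IsPartitionOf W P)
    {A : Finset V} (hA : A ∈ P) : A ⊆ W := by
  rw [← h.2.2]; exact Finset.le_sup (f := id) hA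

lemma filter_mem_eq {W : Finset V} {P : Finset (Finset V)} (h : IsPartitionOf W P)
    {a : V} (ha : a ∈ W) :
    ∃ A₀ ∈ P, a ∈ A₀ ∧ P.filter (fun A => a ∈ A) = {A₀} := by
  have h1 : a ∈ P.sup id := h.2.2 ▸ ha
  rw [Finset.mem_sup] at h1
  obtain ⟨A₀, hA₀, haA₀⟩ := h1
  refine ⟨A₀, hA₀, haA₀, ?_⟩
  ext B
  simp only [Finset.mem_filter, Finset.mem_singleton]
  constructor
  · rintro ⟨hB, haB⟩
    by_contra hne
    exact (Finset.disjoint_left.mp (h.2.1 B hB A₀ hA₀ hne) haB) haA₀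
  · rintro rfl; exact ⟨hA₀, haA₀⟩

lemma card_filter_mem {W : Finset V} {P : Finset (Finset V)} (h : IsPartitionOf W P) (a : V) :
    (((P.filter (fun A => a ∈ A)).card : ℝ)) = if a ∈ W then 1 else 0 := by
  by_cases ha : a ∈ W
  · obtain ⟨A₀, -, -, hf⟩ := filter_mem_eq h ha
    simp [hf, ha]
  · rw [Finset.filter_false_of_mem (fun A hA haA => ha (part_subset h hA haA)), if_neg ha]
    simp

lemma sp_le_one {W : Finset V} {P : Finset (Finset V)} (h : IsPartitionOf W P) (a b : V) :
    (P.filter (fun A => a ∈ A ∧ b ∈ A)).card ≤ 1 := by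
  have hsub : (P.filter (fun A => a ∈ A ∧ b ∈ A)) ⊆ P.filter (fun A => a ∈ A) := by
    intro A hA
    simp only [Finset.mem_filter] at hA ⊢
    exact ⟨hA.1, hA.2.1⟩
  refine le_trans (Finset.card_le_card hsub) ?_
  by_cases ha : a ∈ W
  · obtain ⟨A₀, -, -, hf⟩ := filter_mem_eq h ha
    simp [hf]
  · rw [Finset.filter_false_of_mem (fun A hA haA => ha (part_subset h hA haA))]
    simp

lemma sp_cases {W : Finset V} {P : Finset (Finset V)} (h : IsPartitionOf W P) (a b : V) :
    (P.filter (fun A => a ∈ A ∧ b ∈ A)).card = 0 ∨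
      (P.filter (fun A => a ∈ A ∧ b ∈ A)).card = 1 :=
  Nat.le_one_iff_eq_zero_or_eq_one.mp (sp_le_one h a b)

lemma allFalse_iff (P : Finset (Finset V)) (a b : V) :
    (∀ A ∈ P, bothB A s(a, b) = false) ↔ (P.filter (fun A => a ∈ A ∧ b ∈ A)) = ∅ := by
  rw [Finset.filter_eq_empty_iff]
  simp

lemma edge_cross_sum {W : Finset V} {P : Finset (Finset V)} (h : IsPartitionOf W P)
    (a b : V) (hab : a ≠ b) :
    ∑ A ∈ P, indP (fun e => crossB A e = true) s(a, b)
      = (if a ∈ W then (1 : ℝ) else 0) + (if b ∈ W then 1 else 0)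
        - 2 * ((P.filter (fun A => a ∈ A ∧ b ∈ A)).card : ℝ) := by
  have hpt : ∀ A ∈ P, indP (fun e => crossB A e = true) s(a, b)
      = ((if a ∈ A then (1 : ℝ) else 0) + (if b ∈ A then 1 else 0))
        - 2 * (if a ∈ A ∧ b ∈ A then (1 : ℝ) else 0) := by
    intro A _
    by_cases h1 : a ∈ A <;> by_cases h2 : b ∈ A <;> simp [indP, h1, h2] <;> norm_num
  rw [Finset.sum_congr rfl hpt, Finset.sum_sub_distrib, Finset.sum_add_distrib,
    ← Finset.mul_sum]
  congr 1
  · rw [Finset.sum_boole, Finset.sum_boole, card_filter_mem h, card_filter_mem h]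
  · congr 1
    rw [Finset.sum_boole]

lemma L1_pointwise {P : Finset (Finset V)} (h : IsPartitionOf Finset.univ P)
    (a b : V) (hab : a ≠ b) :
    ∑ A ∈ P, indP (fun e => crossB A e = true) s(a, b)
      = 2 * indP (fun e => decide (∀ A ∈ P, bothB A e = false) = true) s(a, b) := by
  rw [edge_cross_sum h a b hab]
  have hind : indP (fun e => decide (∀ A ∈ P, bothB A e = false) = true) s(a, b)
      = if (P.filter (fun A => a ∈ A ∧ b ∈ A)) = ∅ then 1 else 0 := by
    simp only [indP, decide_eq_true_eq]
    exact if_congr (allFalse_iff P a b) rfl rfl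
  rw [hind]
  rcases sp_cases h a b with hc | hc
  · have h0 : P.filter (fun A => a ∈ A ∧ b ∈ A) = ∅ := Finset.card_eq_zero.mp hc
    simp [h0, hc]
    norm_num
  · have hne : P.filter (fun A => a ∈ A ∧ b ∈ A) ≠ ∅ := by
      intro h0; rw [h0] at hc; simp at hc
    simp [hne, hc]
    norm_num

lemma L2_pointwise {S : Finset V} {P : Finset (Finset V)}
    (h : IsPartitionOf (Finset.univ \ S) P) (a b : V) (hab : a ≠ b) :
    ∑ A ∈ P, indP (fun e => crossB A e = true) s(a, b)
      = 2 * indP (fun e => (decide (∀ A ∈ P, bothB A e = false) = true)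
            ∧ bothB (Finset.univ \ S) e = true) s(a, b)
        + ((if a ∈ S then (1 : ℝ) else 0) + (if b ∈ S then 1 else 0))
        - 2 * (if a ∈ S ∧ b ∈ S then (1 : ℝ) else 0) := by
  rw [edge_cross_sum h a b hab]
  by_cases ha : a ∈ S
  · have ha' : a ∉ Finset.univ \ S := by simp [ha]
    have h0 : P.filter (fun A => a ∈ A ∧ b ∈ A) = ∅ :=
      Finset.filter_false_of_mem (fun A hA hm => ha' (part_subset h hA hm.1))
    by_cases hb : b ∈ S <;> simp [indP, ha, hb, h0] <;> norm_num
  · by_cases hb : b ∈ S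
    · have hb' : b ∉ Finset.univ \ S := by simp [hb]
      have h0 : P.filter (fun A => a ∈ A ∧ b ∈ A) = ∅ :=
        Finset.filter_false_of_mem (fun A hA hm => hb' (part_subset h hA hm.2))
      simp [indP, ha, hb, h0]
    · have hind : indP (fun e => (decide (∀ A ∈ P, bothB A e = false) = true)
            ∧ bothB (Finset.univ \ S) e = true) s(a, b)
          = if (P.filter (fun A => a ∈ A ∧ b ∈ A)) = ∅ then 1 else 0 := by
        have hW : bothB (Finset.univ \ S) s(a, b) = true := by simp [ha, hb]
        simp only [indP, decide_eq_true_eq, hW, and_true]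
        exact if_congr (allFalse_iff P a b) rfl rfl
      rw [hind]
      rcases sp_cases h a b with hc | hc
      · have h0 : P.filter (fun A => a ∈ A ∧ b ∈ A) = ∅ := Finset.card_eq_zero.mp hc
        simp [ha, hb, h0, hc]
        norm_num
      · have hne : P.filter (fun A => a ∈ A ∧ b ∈ A) ≠ ∅ := by
          intro h0; rw [h0] at hc; simp at hc
        simp [ha, hb, hc, hne]
        norm_num

lemma deg_pointwise (S : Finset V) (a b : V) (hab : a ≠ b) :
    ∑ v ∈ S, indP (fun e => crossB ({v} : Finset V) e = true) s(a, b)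
      = (if a ∈ S then (1 : ℝ) else 0) + (if b ∈ S then 1 else 0) := by
  have hpt : ∀ v ∈ S, indP (fun e => crossB ({v} : Finset V) e = true) s(a, b)
      = (if a = v then (1 : ℝ) else 0) + (if b = v then 1 else 0) := by
    intro v _
    by_cases h1 : a = v <;> by_cases h2 : b = v <;>
      simp [indP, h1, h2]
    exact absurd (h1.trans h2.symm) hab
  rw [Finset.sum_congr rfl hpt, Finset.sum_add_distrib,
    Finset.sum_ite_eq S a (fun _ => (1 : ℝ)), Finset.sum_ite_eq S b (fun _ => (1 : ℝ))]

lemma sum_cut_eq_two_ePart {P : Finset (Finset V)} (h : IsPartitionOf Finset.univ P)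
    (E : Multiset (Sym2 V)) (hE : ∀ e ∈ E, ¬ e.IsDiag) :
    ∑ A ∈ P, (cutE E A : ℝ) = 2 * (ePart E P : ℝ) := by
  have h1 : ∀ A ∈ P, (cutE E A : ℝ) = (E.map (indP (fun e => crossB A e = true))).sum :=
    fun A _ => card_filter_real _ E
  rw [Finset.sum_congr rfl h1, sum_map_swap, ePart, card_filter_real,
    ← Multiset.sum_map_mul_left]
  refine congrArg Multiset.sum (Multiset.map_congr rfl ?_)
  intro e he
  have hnd := hE e he
  revert hnd
  induction e using Sym2.inductionOn with
  | hf a b =>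
    intro hnd
    have hab : a ≠ b := by simpa [Sym2.mk_isDiag_iff] using hnd
    exact L1_pointwise h a b hab

lemma sum_cut_split {S : Finset V} {P : Finset (Finset V)}
    (h : IsPartitionOf (Finset.univ \ S) P) (E : Multiset (Sym2 V))
    (hE : ∀ e ∈ E, ¬ e.IsDiag) :
    ∑ A ∈ P, (cutE E A : ℝ)
      = 2 * (ePart (E.filter (fun e => bothB (Finset.univ \ S) e = true)) P : ℝ)
        + ∑ v ∈ S, (cutE E {v} : ℝ) - 2 * (insideE E S : ℝ) := by
  have h1 : ∀ A ∈ P, (cutE E A : ℝ) = (E.map (indP (fun e => crossB A e = true))).sum :=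
    fun A _ => card_filter_real _ E
  have h2 : ∀ v ∈ S, (cutE E ({v} : Finset V) : ℝ)
      = (E.map (indP (fun e => crossB ({v} : Finset V) e = true))).sum :=
    fun v _ => card_filter_real _ E
  have hep : (ePart (E.filter (fun e => bothB (Finset.univ \ S) e = true)) P : ℝ)
      = (E.map (indP (fun e => (decide (∀ A ∈ P, bothB A e = false) = true)
          ∧ bothB (Finset.univ \ S) e = true))).sum := by
    rw [ePart, Multiset.filter_filter, card_filter_real]
  rw [Finset.sum_congr rfl h1, sum_map_swap, hep, ← Multiset.sum_map_mul_left,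
    Finset.sum_congr rfl h2, sum_map_swap, insideE, card_filter_real,
    ← Multiset.sum_map_mul_left, ← Multiset.sum_map_add, ← Multiset.sum_map_sub]
  refine congrArg Multiset.sum (Multiset.map_congr rfl ?_)
  intro e he
  have hnd := hE e he
  revert hnd
  induction e using Sym2.inductionOn with
  | hf a b =>
    intro hnd
    have hab : a ≠ b := by simpa [Sym2.mk_isDiag_iff] using hnd
    have hib : indP (fun e => bothB S e = true) s(a, b)
        = if a ∈ S ∧ b ∈ S then (1 : ℝ) else 0 := by
      simp only [indP, bothB_mk]
      exact if_congr (by simp) rfl rfl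
    rw [L2_pointwise h a b hab, deg_pointwise S a b hab, hib]

lemma partition_union {S : Finset V} {P : Finset (Finset V)}
    (h : IsPartitionOf (Finset.univ \ S) P) :
    IsPartitionOf Finset.univ (P ∪ S.image (fun v => ({v} : Finset V))) := by
  refine ⟨?_, ?_, ?_⟩
  · intro A hA
    rcases Finset.mem_union.mp hA with hA | hA
    · exact h.1 A hA
    · obtain ⟨v, -, rfl⟩ := Finset.mem_image.mp hA
      exact Finset.singleton_nonempty v
  · intro A hA B hB hne
    rcases Finset.mem_union.mp hA with hA | hA <;> rcases Finset.mem_union.mp hB with hB | hB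
    · exact h.2.1 A hA B hB hne
    · obtain ⟨v, hv, rfl⟩ := Finset.mem_image.mp hB
      rw [Finset.disjoint_singleton_right]
      intro hvA
      have := part_subset h hA hvA
      simp at this
      exact this hv
    · obtain ⟨v, hv, rfl⟩ := Finset.mem_image.mp hA
      rw [Finset.disjoint_singleton_left]
      intro hvB
      have := part_subset h hB hvB
      simp at this
      exact this hv
    · obtain ⟨v, hv, rfl⟩ := Finset.mem_image.mp hA
      obtain ⟨w, hw, rfl⟩ := Finset.mem_image.mp hB
      rw [Finset.disjoint_singleton_right, Finset.mem_singleton]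
      intro hvw
      exact hne (by rw [hvw])
  · apply Finset.Subset.antisymm
    · intro v _; exact Finset.mem_univ v
    · intro v _
      rw [Finset.mem_sup]
      by_cases hv : v ∈ S
      · exact ⟨{v}, Finset.mem_union_right _ (Finset.mem_image_of_mem _ hv),
          Finset.mem_singleton_self v⟩
      · have hvW : v ∈ Finset.univ \ S := by simp [hv]
        rw [← h.2.2, Finset.mem_sup] at hvW
        obtain ⟨A, hA, hvA⟩ := hvW
        exact ⟨A, Finset.mem_union_left _ hA, hvA⟩

lemma pq_disjoint {S : Finset V} {P : Finset (Finset V)}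
    (h : IsPartitionOf (Finset.univ \ S) P) :
    Disjoint P (S.image (fun v => ({v} : Finset V))) := by
  rw [Finset.disjoint_left]
  intro A hA hA'
  obtain ⟨v, hv, rfl⟩ := Finset.mem_image.mp hA'
  have := part_subset h hA (Finset.mem_singleton_self v)
  simp at this
  exact this hv

lemma sum_union_image {S : Finset V} {P : Finset (Finset V)}
    (h : IsPartitionOf (Finset.univ \ S) P) (f : Finset V → ℝ) :
    ∑ A ∈ P ∪ S.image (fun v => ({v} : Finset V)), f A
      = ∑ A ∈ P, f A + ∑ v ∈ S, f {v} := by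
  rw [Finset.sum_union (pq_disjoint h), Finset.sum_image]
  intro u _ v _ huv
  exact Finset.singleton_injective huv

end Aux

theorem stmt6 {V : Type*} [Fintype V] [DecidableEq V] (G G₀ : MGraph V)
    (hsp : G₀.edges ≤ G.edges) (l : Finset V → ℝ) (hl0 : l ∅ = 0)
    (hsm : IntersectingSupermodular l) (ε : ℝ) (hε : 0 < ε)
    (hpc : LPC G (fun A => l A / ε))
    (hdeg : ∀ X : Finset V, (cut G₀ X : ℝ) ≥ ε * (cut G X : ℝ)) :
    ∀ S : Finset V, ∀ P : Finset (Finset V),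
      IsLPCComponents G₀.edges (Finset.univ \ S) l P →
      ThetaVal G₀.edges (Finset.univ \ S) l P ≤
        (∑ v ∈ S, ((deg G₀ v : ℝ) / 2 + ε / 2 * (deg G v : ℝ) - l {v}))
          + l Finset.univ - (insideE G₀.edges S : ℝ) := by
  intro S P hP
  obtain ⟨hpart, -, -⟩ := hP
  set Q := S.image (fun v => ({v} : Finset V)) with hQ
  have hP' : IsPartitionOf Finset.univ (P ∪ Q) := partition_union hpart
  have hB := hpc (P ∪ Q) hP'
  have hfu : G.edges.filter (fun e => bothB Finset.univ e = true) = G.edges := by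
    rw [Multiset.filter_eq_self]
    intro e he
    induction e using Sym2.inductionOn with
    | hf a b => simp
  rw [hfu] at hB
  have hC := sum_cut_eq_two_ePart hP' G.edges G.loopless
  have hF := sum_cut_split hpart G₀.edges G₀.loopless
  have hsplitl := sum_union_image hpart l
  have hsplitc := sum_union_image hpart (fun A => (cutE G.edges A : ℝ))
  have hE : ∑ A ∈ P, ε * (cutE G.edges A : ℝ) ≤ ∑ A ∈ P, (cutE G₀.edges A : ℝ) :=
    Finset.sum_le_sum (fun A _ => hdeg A)
  rw [← Finset.mul_sum] at hE
  have hkey : ∑ A ∈ P ∪ Q, l A - l Finset.univ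
      ≤ ε * (ePart G.edges (P ∪ Q) : ℝ) := by
    have h1 : ∑ A ∈ P ∪ Q, l A / ε - l Finset.univ / ε
        ≤ (ePart G.edges (P ∪ Q) : ℝ) := hB
    rw [← Finset.sum_div] at h1
    rw [div_sub_div_same] at h1
    calc ∑ A ∈ P ∪ Q, l A - l Finset.univ
        = ((∑ A ∈ P ∪ Q, l A - l Finset.univ) / ε) * ε := by
          field_simp
      _ ≤ (ePart G.edges (P ∪ Q) : ℝ) * ε := by
          apply mul_le_mul_of_nonneg_right _ hε.le
          exact h1
      _ = ε * (ePart G.edges (P ∪ Q) : ℝ) := mul_comm _ _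
  rw [hsplitl] at hkey
  -- combine
  unfold ThetaVal
  have hdz : ∀ v, (deg G₀ v : ℝ) = (cutE G₀.edges ({v} : Finset V) : ℝ) := fun v => rfl
  have hdz' : ∀ v, (deg G v : ℝ) = (cutE G.edges ({v} : Finset V) : ℝ) := fun v => rfl
  simp only [hdz, hdz']
  rw [Finset.sum_sub_distrib, Finset.sum_add_distrib, ← Finset.sum_div, ← Finset.mul_sum]
  -- hC : ∑ A ∈ P ∪ Q, cutE G A = 2 * ePart
  rw [hsplitc] at hC
  nlinarith [hF, hkey, hE, hC, hε.le]
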